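/- Let Ḡ be an orientation of a finite undirected simple graph G=(V,E) with maximum out-degree Δ satisfying Invariant 2 (no improving path starting at any vertex of out-degree Δ), let {u,v} ∉ E with odeg(u,Ḡ) ≤ odeg(v,Ḡ) and odeg(u,Ḡ) + 1 < Δ, and let G̃ be the orientation of G + {u,v} obtained from Ḡ by adding the directed edge (u,v). Then G̃ has maximum out-degree Δ and satisfies Invariant 2. -/

import Mathlib

open Finset

/-- An orientation of a simple graph `G`: a choice, for each edge `{u,v}` of `G`,
of exactly one of the directed edges `(u,v)`, `(v,u)`. -/
structure GraphOrientation {V : Type*} (G : SimpleGraph V) where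
  dir : V → V → Bool
  dir_adj : ∀ u v, dir u v = true → G.Adj u v
  exactly_one : ∀ u v, G.Adj u v → (dir u v = true ↔ ¬ dir v u = true)

/-- Out-degree of `v` w.r.t. a directed-edge relation `d`. -/
def outDegF {V : Type*} [Fintype V] (d : V → V → Bool) (v : V) : ℕ :=
  (Finset.univ.filter fun w => d v w = true).card

/-- Out-degree of a vertex in an orientation. -/
def GraphOrientation.outDeg {V : Type*} [Fintype V] {G : SimpleGraph V}
    (o : GraphOrientation G) (v : V) : ℕ := outDegF o.dir v

/-- Maximum out-degree `Δ` of an orientation. -/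
def GraphOrientation.maxOutDeg {V : Type*} [Fintype V] {G : SimpleGraph V}
    (o : GraphOrientation G) : ℕ := Finset.univ.sup o.outDeg

/-- `|E(S)|`: the number of edges of `G` with both endpoints in `S`. -/
def edgeCount {V : Type*} [Fintype V] [DecidableEq V] (G : SimpleGraph V)
    [DecidableRel G.Adj] (S : Finset V) : ℕ :=
  (G.edgeFinset.filter fun e => ∀ x ∈ e, x ∈ S).card

/-- A directed path in an orientation: a list of distinct vertices, of length at
least two (i.e. `k ≥ 1` edges), with consecutive vertices joined by directed edges. -/
def IsDirPath {V : Type*} {G : SimpleGraph V} (o : GraphOrientation G) (p : List V) : Prop :=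
  p.Nodup ∧ 2 ≤ p.length ∧ List.Chain' (fun a b => o.dir a b = true) p

/-- A directed path from `a` to `b`. -/
def IsPathFrom {V : Type*} {G : SimpleGraph V} (o : GraphOrientation G)
    (p : List V) (a b : V) : Prop :=
  IsDirPath o p ∧ p.head? = some a ∧ p.getLast? = some b

/-- Invariant 1: there is no improving path between any two vertices, i.e. no directed
path `⟨a,…,b⟩` with `odeg(a) > odeg(b) + 1`. -/
def Invariant1 {V : Type*} [Fintype V] {G : SimpleGraph V} (o : GraphOrientation G) : Prop :=
  ∀ p a b, IsPathFrom o p a b → o.outDeg a ≤ o.outDeg b + 1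

/-- Invariant 2: there is no improving path starting at a vertex of maximum out-degree. -/
def Invariant2 {V : Type*} [Fintype V] {G : SimpleGraph V} (o : GraphOrientation G) : Prop :=
  ∀ p a b, IsPathFrom o p a b → o.outDeg a = o.maxOutDeg → o.outDeg a ≤ o.outDeg b + 1

/-- Flipping the directed path `p`: every directed edge `(v_i, v_{i+1})` of `p`
is replaced by the reversed edge `(v_{i+1}, v_i)`; all other edges are unchanged. -/
def flipDir {V : Type*} [DecidableEq V] (d : V → V → Bool) (p : List V) : V → V → Bool :=
  fun a b => if (a, b) ∈ p.zip p.tail ∨ (b, a) ∈ p.zip p.tail then d b a else d a b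

/-- `G + {u,v}`: the graph obtained from `G` by inserting the edge `{u,v}`. -/
def addE {V : Type*} (G : SimpleGraph V) (u v : V) : SimpleGraph V :=
  G ⊔ SimpleGraph.fromEdgeSet {s(u, v)}

/-- `G − {u,v}`: the graph obtained from `G` by deleting the edge `{u,v}`. -/
def delE {V : Type*} (G : SimpleGraph V) (u v : V) : SimpleGraph V :=
  G.deleteEdges {s(u, v)}

/-- Insert `{u,v} ∉ E` with `odeg(u) ≤ odeg(v)` and `odeg(u) + 1 < Δ`
into an Invariant-2 orientation of maximum out-degree `Δ`, directed as `(u,v)`. Then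
the resulting orientation `G̃` has maximum out-degree `Δ` and satisfies Invariant 2. -/
lemma chain_split {α : Type*} (R S : α → α → Prop) :
    ∀ p : List α, List.Chain' S p →
      List.Chain' R p ∨ ∃ p' x y l2, p = p' ++ y :: l2 ∧ p'.getLast? = some x ∧
        S x y ∧ ¬ R x y ∧ List.Chain' R p'
  | [] , _ => Or.inl List.isChain_nil
  | [x], _ => Or.inl (List.isChain_singleton x)
  | x :: y :: t, h => by
    rw [List.Chain', List.isChain_cons_cons] at h
    obtain ⟨hxy, ht⟩ := h
    by_cases hR : R x y
    · rcases chain_split R S (y :: t) ht with hc | ⟨p', x', y', l2, hp, hlast, hS, hnR, hch⟩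
      · exact Or.inl (List.isChain_cons_cons.mpr ⟨hR, hc⟩)
      · refine Or.inr ⟨x :: p', x', y', l2, by rw [List.cons_append, ← hp], ?_, hS, hnR, ?_⟩
        · have hne : p' ≠ [] := by
            intro h0; rw [h0] at hlast; simp at hlast
          rcases p' with _ | ⟨c, cs⟩
          · exact absurd rfl hne
          · simpa using hlast
        · have hne : p' ≠ [] := by
            intro h0; rw [h0] at hlast; simp at hlast
          have hhead : p'.head? = some y := by
            have := congrArg List.head? hp
            rwa [List.head?_cons, List.head?_append_of_ne_nil _ hne, eq_comm] at this
          rw [List.Chain', List.isChain_cons]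
          exact ⟨fun z hz => by rw [hhead] at hz; injection hz with hz; exact hz ▸ hR, hch⟩
    · exact Or.inr ⟨[x], x, y, t, rfl, rfl, hxy, hR, List.isChain_singleton x⟩

theorem insert_small_keeps_invariant2 {V : Type*} [Fintype V] [DecidableEq V]
    {G : SimpleGraph V} (o : GraphOrientation G) (hinv : Invariant2 o)
    (u v : V) (hne : u ≠ v) (hE : ¬ G.Adj u v) (hdeg : o.outDeg u ≤ o.outDeg v)
    (hlt : o.outDeg u + 1 < o.maxOutDeg)
    (ot : GraphOrientation (addE G u v))
    (hot : ∀ a b, ot.dir a b = true ↔ (o.dir a b = true ∨ (a = u ∧ b = v))) :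
    ot.maxOutDeg = o.maxOutDeg ∧ Invariant2 ot := by
  have houv : o.dir u v = false := by
    by_contra h
    exact hE (o.dir_adj u v (by simpa using h))
  have hdeg_ne : ∀ a, a ≠ u → ot.outDeg a = o.outDeg a := by
    intro a ha
    unfold GraphOrientation.outDeg outDegF
    congr 1
    apply Finset.filter_congr
    intro w _
    rw [hot]
    simp [ha]
  have hdeg_u : ot.outDeg u = o.outDeg u + 1 := by
    unfold GraphOrientation.outDeg outDegF
    have hset : (Finset.univ.filter fun w => ot.dir u w = true)
        = insert v (Finset.univ.filter fun w => o.dir u w = true) := by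
      ext w
      simp only [Finset.mem_filter, Finset.mem_univ, true_and, Finset.mem_insert, hot]
      tauto
    rw [hset, Finset.card_insert_of_notMem (by simp [houv]), Nat.add_comm]
  have hle : ∀ a, ot.outDeg a ≤ o.maxOutDeg := by
    intro a
    by_cases ha : a = u
    · rw [ha, hdeg_u]; omega
    · rw [hdeg_ne a ha]; exact Finset.le_sup (Finset.mem_univ a)
  have hmono : ∀ a, o.outDeg a ≤ ot.outDeg a := by
    intro a
    by_cases ha : a = u
    · rw [ha, hdeg_u]; omega
    · rw [hdeg_ne a ha]
  have hmax : ot.maxOutDeg = o.maxOutDeg := by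
    apply le_antisymm
    · exact Finset.sup_le fun a _ => hle a
    · have : Nonempty V := ⟨u⟩
      obtain ⟨w, -, hw⟩ := Finset.exists_mem_eq_sup (Finset.univ : Finset V)
        Finset.univ_nonempty o.outDeg
      have hw' : o.maxOutDeg = o.outDeg w := hw
      have hwu : w ≠ u := by
        intro h; rw [h] at hw'; omega
      calc o.maxOutDeg = ot.outDeg w := by rw [hw', hdeg_ne w hwu]
        _ ≤ ot.maxOutDeg := Finset.le_sup (Finset.mem_univ w)
  refine ⟨hmax, ?_⟩
  intro p a b hpath hmaxa
  rw [hmax] at hmaxa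
  have hau : a ≠ u := by
    intro h
    rw [h, hdeg_u] at hmaxa
    omega
  have hda : o.outDeg a = o.maxOutDeg := by rw [← hdeg_ne a hau, hmaxa]
  obtain ⟨⟨hnd, hlen, hch⟩, hhead, hlast⟩ := hpath
  rcases chain_split (fun x y => o.dir x y = true) (fun x y => ot.dir x y = true) p hch with
    hc | ⟨p', x, y, l2, hp, hplast, hS, hnR, hch'⟩
  · have := hinv p a b ⟨⟨hnd, hlen, hc⟩, hhead, hlast⟩ hda
    calc ot.outDeg a = o.outDeg a := hdeg_ne a hau
      _ ≤ o.outDeg b + 1 := this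
      _ ≤ ot.outDeg b + 1 := by have := hmono b; omega
  · have hxy : x = u ∧ y = v := by
      rcases (hot x y).mp hS with h | h
      · exact absurd h hnR
      · exact h
    obtain ⟨hx, hy⟩ := hxy
    rw [hx] at hplast
    have hpne : p' ≠ [] := by intro h0; rw [h0] at hplast; simp at hplast
    have hphead : p'.head? = some a := by
      rw [hp, List.head?_append_of_ne_nil _ hpne] at hhead
      exact hhead
    have hpnd : p'.Nodup := (hp ▸ hnd).sublist (List.sublist_append_left p' _)
    have hplen : 2 ≤ p'.length := by
      rcases p' with _ | ⟨c, cs⟩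
      · exact absurd rfl hpne
      · rcases cs with _ | ⟨d, ds⟩
        · exfalso; apply hau
          simp only [List.head?_cons, Option.some.injEq] at hphead
          simp only [List.getLast?_singleton, Option.some.injEq] at hplast
          exact hphead ▸ hplast
        · simp
    have := hinv p' a u ⟨⟨hpnd, hplen, hch'⟩, hphead, hplast⟩ hda
    omega
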